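/- Let (μ(n))_{n≥0} be a sequence of indeterminates (or generic field elements). For 0 ≤ a ≤ j ≤ b define D_j(μ;a,b) as the determinant of the (b-a)×(b-a) matrix with (r,c) entry μ(a+r+c) for columns indexed by c ∈ {a,...,b}\{j} (shifted appropriately), i.e., the Hankel matrix on rows μ(a),...,μ(b-1) with column j deleted; set D_j(μ;a,b)=0 for j<a or j>b. Let ν(i)=μ(i+1). Then for n ≥ 2 and m ≥ 1: det(D_j(μ;0,i+m))_{i,j=0}^{n-1} = D_0(μ;0,m) · det(D_j(ν;0,i+m))_{i,j=0}^{n-2} · ∏_{i=1}^{n-1} D_{i+m}(μ;0,i+m)/D_{i+m}(μ;1,i+m). -/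

import Mathlib

open Matrix Finset

section Auxiliary

lemma val_succAbove {k : ℕ} (p : Fin (k+1)) (c : Fin k) :
    ((p.succAbove c : Fin (k+1)) : ℕ) = if (c:ℕ) < (p:ℕ) then (c:ℕ) else (c:ℕ)+1 := by
  rw [Fin.succAbove]
  split_ifs with h1 h2 h2 <;>
    simp_all [Fin.lt_def, Fin.coe_castSucc, Fin.val_succ]

lemma det_single_row_zero {R : Type*} [CommRing R] {k : ℕ}
    (M : Matrix (Fin (k+1)) (Fin (k+1)) R) (p : Fin (k+1))
    (h : ∀ c, M 0 c = if c = p then 1 else 0) :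
    M.det = (-1)^(p:ℕ) * (M.submatrix Fin.succ p.succAbove).det := by
  rw [Matrix.det_succ_row_zero, Fintype.sum_eq_single p ?_]
  · rw [h, if_pos rfl, mul_one]
  · intro c hc; rw [h, if_neg hc]; ring

lemma det_single_col_zero {R : Type*} [CommRing R] {k : ℕ}
    (M : Matrix (Fin (k+1)) (Fin (k+1)) R)
    (h : ∀ i, i ≠ 0 → M i 0 = 0) :
    M.det = M 0 0 * (M.submatrix Fin.succ Fin.succ).det := by
  rw [Matrix.det_succ_column_zero, Fintype.sum_eq_single 0 ?_]
  · simp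
  · intro i hi; rw [h i hi]; ring

lemma det_single_col_last {R : Type*} [CommRing R] {k : ℕ}
    (M : Matrix (Fin (k+1)) (Fin (k+1)) R)
    (h : ∀ i, i ≠ Fin.last k → M i (Fin.last k) = 0) :
    M.det = M (Fin.last k) (Fin.last k) *
      (M.submatrix (Fin.last k).succAbove (Fin.last k).succAbove).det := by
  rw [Matrix.det_succ_column _ (Fin.last k), Fintype.sum_eq_single (Fin.last k) ?_]
  · rw [Fin.val_last, Even.neg_one_pow ⟨k, rfl⟩, one_mul]
  · intro i hi; rw [h i hi]; ring

lemma det_two_cols {R : Type*} [CommRing R] {k : ℕ} (u v : Fin (k+2) → R) :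
    (Matrix.of fun i c : Fin (k+2) =>
      if c = 0 then u i else if c = Fin.last (k+1) then v i
      else if i = c then 1 else 0).det
    = u 0 * v (Fin.last (k+1)) - v 0 * u (Fin.last (k+1)) := by
  set D : Matrix (Fin (k+2)) (Fin (k+2)) R := Matrix.of fun i c : Fin (k+2) =>
      if c = 0 then u i else if c = Fin.last (k+1) then v i
      else if i = c then 1 else 0 with hD
  have hne0 : ∀ t : Fin k, (t.succ.castSucc : Fin (k+2)) ≠ 0 := by
    intro t; simp [Fin.ext_iff]
  have hnel : ∀ t : Fin k, (t.succ.castSucc : Fin (k+2)) ≠ Fin.last (k+1) := by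
    intro t h
    have h2 := congrArg Fin.val h
    simp only [Fin.coe_castSucc, Fin.val_succ, Fin.val_last] at h2
    have := t.isLt; omega
  have hl0 : (Fin.last (k+1) : Fin (k+2)) ≠ 0 := by
    simp [Fin.ext_iff]
  have hg : Function.Bijective
      (Sum.elim ![0, Fin.last (k+1)] (fun t : Fin k => t.succ.castSucc) :
        Fin 2 ⊕ Fin k → Fin (k+2)) := by
    rw [Fintype.bijective_iff_injective_and_card]
    refine ⟨?_, by simp; omega⟩
    rintro (i|s) (j|t) hxy
    · fin_cases i <;> fin_cases j <;> simp_all [Fin.ext_iff, -Fin.val_eq_zero_iff] <;> omega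
    · exfalso; fin_cases i
      · exact hne0 t (by simpa using hxy.symm)
      · exact hnel t (by simpa using hxy.symm)
    · exfalso; fin_cases j
      · exact hne0 s (by simpa using hxy)
      · exact hnel s (by simpa using hxy)
    · have : (s : ℕ) = t := by
        have := congrArg (fun x : Fin (k+2) => (x : ℕ)) hxy
        simpa using this
      simp [Fin.ext_iff, this]
  let e : Fin 2 ⊕ Fin k ≃ Fin (k+2) := Equiv.ofBijective _ hg
  have hsub : D.submatrix e e =
      Matrix.fromBlocks !![u 0, v 0; u (Fin.last (k+1)), v (Fin.last (k+1))] 0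
        (Matrix.of fun (s : Fin k) (j : Fin 2) =>
          if j = 0 then u s.succ.castSucc else v s.succ.castSucc) 1 := by
    ext x y
    have hst : ∀ s t : Fin k,
        ((s.succ.castSucc : Fin (k+2)) = t.succ.castSucc) ↔ s = t := by
      intro s t
      constructor
      · intro h
        have := congrArg (fun x : Fin (k+2) => (x : ℕ)) h
        simp only [Fin.coe_castSucc, Fin.val_succ] at this
        exact Fin.ext (by omega)
      · rintro rfl; rfl
    rcases x with i|s <;> rcases y with j|t
    · fin_cases i <;> fin_cases j <;>
        simp [e, hD, Equiv.ofBijective, hl0]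
    · fin_cases i <;>
        simp [e, hD, Equiv.ofBijective, hne0 t, hnel t, (hne0 t).symm,
          (hnel t).symm, Ne.symm hl0] <;>
          intro h <;> have h2 := congrArg Fin.val h <;> have := t.isLt <;> simp at h2 <;> omega
    · fin_cases j <;> simp [e, hD, Equiv.ofBijective, hl0]
    · simp [e, hD, Equiv.ofBijective, hne0 t, hnel t, Matrix.one_apply, hst s t]
  calc D.det = (D.submatrix e e).det := (Matrix.det_submatrix_equiv_self e D).symm
    _ = _ := by
      rw [hsub, Matrix.det_fromBlocks_zero₁₂, Matrix.det_one, mul_one,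
        Matrix.det_fin_two]
      simp


lemma dodgson_generic {R : Type*} [CommRing R] [IsDomain R] {k : ℕ}
    (A : Matrix (Fin (k+2)) (Fin (k+2)) R) (hd : A.det ≠ 0) :
    A.det * (A.submatrix (fun t : Fin k => t.succ.castSucc)
        (fun t : Fin k => t.succ.castSucc)).det
    = (A.submatrix (Fin.succAbove 0) (Fin.succAbove 0)).det *
      (A.submatrix (Fin.succAbove (Fin.last (k+1))) (Fin.succAbove (Fin.last (k+1)))).det -
      (A.submatrix (Fin.succAbove 0) (Fin.succAbove (Fin.last (k+1)))).det *
      (A.submatrix (Fin.succAbove (Fin.last (k+1))) (Fin.succAbove 0)).det := by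
  set L : Fin (k+2) := Fin.last (k+1) with hL
  set D : Matrix (Fin (k+2)) (Fin (k+2)) R := Matrix.of fun i c : Fin (k+2) =>
      if c = 0 then adjugate A i 0 else if c = L then adjugate A i L
      else if i = c then 1 else 0 with hDdef
  have hL0 : L ≠ 0 := by simp [hL, Fin.ext_iff]
  -- entries of A * D
  have hc0 : ∀ i, (A * D) i 0 = A.det * (if i = 0 then 1 else 0) := by
    intro i
    have : (A * D) i 0 = (A * adjugate A) i 0 := by
      simp [Matrix.mul_apply, hDdef]
    rw [this, mul_adjugate]
    simp [Matrix.one_apply]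
  have hcL : ∀ i, (A * D) i L = A.det * (if i = L then 1 else 0) := by
    intro i
    have : (A * D) i L = (A * adjugate A) i L := by
      simp [Matrix.mul_apply, hDdef, hL0]
    rw [this, mul_adjugate]
    simp [Matrix.one_apply]
  have hmid : ∀ i c, c ≠ 0 → c ≠ L → (A * D) i c = A i c := by
    intro i c h0 hLc
    simp [Matrix.mul_apply, hDdef, h0, hLc, mul_ite]
  -- determinant of A * D via two expansions
  have hADdet : (A * D).det = A.det * (A.det *
      (A.submatrix (fun t : Fin k => t.succ.castSucc)
        (fun t : Fin k => t.succ.castSucc)).det) := by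
    rw [det_single_col_zero (A * D) (fun i hi => by rw [hc0 i, if_neg hi, mul_zero])]
    congr 1
    · rw [hc0 0, if_pos rfl, mul_one]
    set M2 := (A * D).submatrix Fin.succ Fin.succ with hM2
    have h2 : ∀ i, i ≠ Fin.last k → M2 i (Fin.last k) = 0 := by
      intro i hi
      have : (Fin.succ i : Fin (k+2)) ≠ L := by
        rw [hL, ← Fin.succ_last]
        exact fun h => hi (Fin.succ_injective _ h)
      rw [hM2]
      simp only [Matrix.submatrix_apply]
      rw [Fin.succ_last, ← hL, hcL, if_neg this, mul_zero]
    rw [det_single_col_last M2 h2]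
    congr 1
    · rw [hM2]
      simp only [Matrix.submatrix_apply]
      rw [Fin.succ_last, ← hL, hcL, if_pos rfl, mul_one]
    · congr 1
      ext t s
      simp only [hM2, Matrix.submatrix_apply, Fin.succAbove_last]
      rw [hmid _ _ (by simp [Fin.ext_iff]) (by
        rw [hL]
        intro h
        have h2 := congrArg Fin.val h
        simp only [Fin.val_succ, Fin.coe_castSucc, Fin.val_last] at h2
        have := s.isLt; omega), Fin.succ_castSucc, Fin.succ_castSucc]
  have hDdet : D.det = adjugate A 0 0 * adjugate A L L - adjugate A 0 L * adjugate A L 0 := by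
    rw [hDdef, det_two_cols (fun i => adjugate A i 0) (fun i => adjugate A i L)]
  -- adjugate entries as minors
  have ha00 : adjugate A 0 0 = (A.submatrix (Fin.succAbove 0) (Fin.succAbove 0)).det := by
    rw [Matrix.adjugate_fin_succ_eq_det_submatrix]
    simp
  have haLL : adjugate A L L =
      (A.submatrix (Fin.succAbove L) (Fin.succAbove L)).det := by
    rw [Matrix.adjugate_fin_succ_eq_det_submatrix]
    rw [Even.neg_one_pow ⟨(L:ℕ), rfl⟩, one_mul]
  have ha0L : adjugate A 0 L = (-1)^(L:ℕ) *
      (A.submatrix (Fin.succAbove L) (Fin.succAbove 0)).det := by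
    rw [Matrix.adjugate_fin_succ_eq_det_submatrix]
    simp
  have haL0 : adjugate A L 0 = (-1)^(L:ℕ) *
      (A.submatrix (Fin.succAbove 0) (Fin.succAbove L)).det := by
    rw [Matrix.adjugate_fin_succ_eq_det_submatrix]
    simp
  have hmain : A.det * D.det = (A * D).det := (Matrix.det_mul A D).symm
  rw [hADdet] at hmain
  have hcc := mul_left_cancel₀ hd hmain
  have hpow : ((-1 : R) ^ (L:ℕ)) * ((-1 : R) ^ (L:ℕ)) = 1 := by
    rw [← pow_add, Even.neg_one_pow ⟨(L:ℕ), rfl⟩]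
  rw [hDdet, ha00, haLL, ha0L, haL0, mul_mul_mul_comm, hpow, one_mul] at hcc
  rw [← hcc]
  ring

lemma dodgson {S : Type*} [CommRing S] {k : ℕ}
    (A : Matrix (Fin (k+2)) (Fin (k+2)) S) :
    A.det * (A.submatrix (fun t : Fin k => t.succ.castSucc)
        (fun t : Fin k => t.succ.castSucc)).det
    = (A.submatrix (Fin.succAbove 0) (Fin.succAbove 0)).det *
      (A.submatrix (Fin.succAbove (Fin.last (k+1))) (Fin.succAbove (Fin.last (k+1)))).det -
      (A.submatrix (Fin.succAbove 0) (Fin.succAbove (Fin.last (k+1)))).det *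
      (A.submatrix (Fin.succAbove (Fin.last (k+1))) (Fin.succAbove 0)).det := by
  let X : Matrix (Fin (k+2)) (Fin (k+2)) (MvPolynomial (Fin (k+2) × Fin (k+2)) ℤ) :=
    Matrix.mvPolynomialX (Fin (k+2)) (Fin (k+2)) ℤ
  have hX : X.det ≠ 0 := Matrix.det_mvPolynomialX_ne_zero (Fin (k+2)) ℤ
  have key := dodgson_generic X hX
  let f : MvPolynomial (Fin (k+2) × Fin (k+2)) ℤ →+* S :=
    MvPolynomial.eval₂Hom (Int.castRingHom S) fun p => A p.1 p.2
  have hmap : X.map f = A := by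
    have := Matrix.mvPolynomialX_map_eval₂ (Int.castRingHom S) A
    convert this using 2
    rfl
  have := congrArg f key
  simp only [_root_.map_mul, map_sub, RingHom.map_det, RingHom.mapMatrix_apply,
    ← Matrix.submatrix_map, hmap] at this
  exact this

end Auxiliary

/-- `Dm μ a b j` : determinant of the `(b-a)×(b-a)` Hankel-type matrix on
`μ a, …, μ b` with the column containing `μ j` (in the top row) deleted;
`0` if `j < a` or `j > b`. -/
noncomputable def Dm {F : Type*} [Field F] (μ : ℕ → F) (a b j : ℕ) : F :=
  if a ≤ j ∧ j ≤ b then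
    Matrix.det (Matrix.of fun r c : Fin (b - a) =>
      μ (a + (r : ℕ) + (if (c : ℕ) < j - a then (c : ℕ) else (c : ℕ) + 1)))
  else 0

lemma Dm_key {F : Type*} [Field F] (μ : ℕ → F) (t j : ℕ) :
    Dm μ 1 (t+2) (t+2) * Dm μ 0 (t+2) j
      = Dm μ 0 (t+2) (t+2) * Dm μ 1 (t+2) j
        + Dm μ 1 (t+3) (t+3) * Dm μ 0 (t+1) j := by
  by_cases hj : j ≤ t + 2
  swap
  · rw [show Dm μ 0 (t+2) j = 0 from by rw [Dm, if_neg (by omega)],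
      show Dm μ 1 (t+2) j = 0 from by rw [Dm, if_neg (by omega)],
      show Dm μ 0 (t+1) j = 0 from by rw [Dm, if_neg (by omega)]]
    ring
  set A : Matrix (Fin (t+3)) (Fin (t+3)) F := Matrix.of fun r s : Fin (t+3) =>
    if r = 0 then (if (s:ℕ) = j then 1 else 0) else μ ((r:ℕ) - 1 + (s:ℕ)) with hA
  have E := dodgson (k := t+1) A
  -- determinant of A
  have hdet : A.det = (-1:F)^j * Dm μ 0 (t+2) j := by
    rw [det_single_row_zero A ⟨j, by omega⟩
      (fun c => by simp [hA, Fin.ext_iff, -Fin.val_eq_zero_iff])]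
    congr 1
    rw [Dm, if_pos ⟨Nat.zero_le _, hj⟩]
    congr 1
    ext r c
    have hc := c.isLt
    simp only [Matrix.submatrix_apply, Matrix.of_apply, val_succAbove, Fin.val_succ, hA]
    rw [if_neg (Fin.succ_ne_zero r)]
    congr 1
    simp only [Nat.sub_zero, Fin.val_zero]
    split_ifs <;> omega
  -- interior
  have hint : (A.submatrix (fun x : Fin (t+1) => x.succ.castSucc)
      (fun x : Fin (t+1) => x.succ.castSucc)).det = Dm μ 1 (t+2) (t+2) := by
    rw [Dm, if_pos ⟨by omega, le_refl _⟩]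
    congr 1
    ext r c
    have hc := c.isLt
    simp only [Matrix.submatrix_apply, Matrix.of_apply, hA, Fin.coe_castSucc, Fin.val_succ]
    rw [if_neg (by simp [Fin.ext_iff, -Fin.val_eq_zero_iff])]
    congr 1
    split_ifs <;> omega
  -- A^{0,0}
  have h00 : (A.submatrix (Fin.succAbove 0) (Fin.succAbove 0)).det
      = Dm μ 1 (t+3) (t+3) := by
    rw [Dm, if_pos ⟨by omega, le_refl _⟩]
    congr 1
    ext r c
    have hc := c.isLt
    simp only [Matrix.submatrix_apply, Matrix.of_apply, hA, Fin.succAbove_zero, Fin.val_succ]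
    rw [if_neg (Fin.succ_ne_zero r)]
    congr 1
    split_ifs <;> omega
  -- A^{0,L}
  have h0L : (A.submatrix (Fin.succAbove 0)
      (Fin.succAbove (Fin.last (t+2)))).det = Dm μ 0 (t+2) (t+2) := by
    rw [Dm, if_pos ⟨Nat.zero_le _, le_refl _⟩]
    congr 1
    ext r c
    have hc := c.isLt
    simp only [Matrix.submatrix_apply, Matrix.of_apply, hA, Fin.succAbove_zero,
      Fin.succAbove_last, Fin.val_succ, Fin.coe_castSucc]
    rw [if_neg (Fin.succ_ne_zero r)]
    congr 1
    split_ifs <;> omega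
  -- A^{L,L}
  have hLL : (A.submatrix (Fin.succAbove (Fin.last (t+2)))
      (Fin.succAbove (Fin.last (t+2)))).det = (-1:F)^j * Dm μ 0 (t+1) j := by
    by_cases hj1 : j ≤ t + 1
    · rw [det_single_row_zero _ ⟨j, by omega⟩ (fun c => by
        simp only [Matrix.submatrix_apply, Fin.succAbove_last, Matrix.of_apply, hA]
        rw [if_pos (by simp [Fin.ext_iff])]
        simp [Fin.ext_iff])]
      congr 1
      rw [Dm, if_pos ⟨Nat.zero_le _, hj1⟩]
      congr 1
      ext r c
      have hc := c.isLt
      simp only [Matrix.submatrix_apply, Matrix.of_apply, hA, Fin.succAbove_last,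
        val_succAbove, Fin.coe_castSucc, Fin.val_succ]
      rw [if_neg (by simp [Fin.ext_iff, -Fin.val_eq_zero_iff])]
      congr 1
      simp only [Nat.sub_zero, Fin.val_zero]
      split_ifs <;> omega
    · have hj2 : j = t + 2 := by omega
      rw [Matrix.det_eq_zero_of_row_eq_zero 0 (fun c => by
        have hc := c.isLt
        simp only [Matrix.submatrix_apply, Fin.succAbove_last, Matrix.of_apply, hA]
        rw [if_pos (by simp [Fin.ext_iff])]
        rw [if_neg (by simp only [Fin.coe_castSucc]; omega)])]
      rw [show Dm μ 0 (t+1) j = 0 from by rw [Dm, if_neg (by omega)], mul_zero]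
  -- A^{L,0}
  rcases j with _ | j'
  · -- j = 0
    have hL0 : (A.submatrix (Fin.succAbove (Fin.last (t+2)))
        (Fin.succAbove 0)).det = 0 := by
      apply Matrix.det_eq_zero_of_row_eq_zero 0
      intro c
      simp only [Matrix.submatrix_apply, Fin.succAbove_last, Fin.succAbove_zero,
        Matrix.of_apply, hA]
      rw [if_pos (by simp [Fin.ext_iff])]
      rw [if_neg (by simp)]
    rw [hdet, hint, h00, h0L, hLL, hL0] at E
    rw [show Dm μ 1 (t+2) 0 = 0 from by rw [Dm, if_neg (by omega)]]
    simp only [pow_zero, one_mul] at E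
    rw [mul_comm] at E
    rw [E]
    ring
  · -- j = j' + 1
    have hL0 : (A.submatrix (Fin.succAbove (Fin.last (t+2)))
        (Fin.succAbove 0)).det = (-1:F)^j' * Dm μ 1 (t+2) (j'+1) := by
      rw [det_single_row_zero _ ⟨j', by omega⟩ (fun c => by
        simp only [Matrix.submatrix_apply, Fin.succAbove_last, Fin.succAbove_zero,
          Matrix.of_apply, hA]
        rw [if_pos (by simp [Fin.ext_iff])]
        simp [Fin.ext_iff, Fin.val_succ])]
      congr 1
      rw [Dm, if_pos ⟨by omega, hj⟩]
      congr 1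
      ext r c
      have hc := c.isLt
      simp only [Matrix.submatrix_apply, Matrix.of_apply, hA, Fin.succAbove_last,
        Fin.succAbove_zero, val_succAbove, Fin.coe_castSucc, Fin.val_succ]
      rw [if_neg (by simp [Fin.ext_iff, -Fin.val_eq_zero_iff])]
      congr 1
      split_ifs <;> omega
    rw [hdet, hint, h00, h0L, hLL, hL0] at E
    have hne : ((-1:F)^(j'+1)) ≠ 0 := pow_ne_zero _ (by norm_num)
    apply mul_left_cancel₀ hne
    linear_combination E

lemma Dm_shift {F : Type*} [Field F] (μ : ℕ → F) (b j : ℕ) :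
    Dm μ 1 (b+1) (j+1) = Dm (fun k => μ (k+1)) 0 b j := by
  rw [Dm, Dm]
  by_cases h : j ≤ b
  · rw [if_pos ⟨by omega, by omega⟩, if_pos ⟨Nat.zero_le _, h⟩]
    congr 1
    ext r c
    show μ _ = μ _
    congr 1
    simp only [Nat.add_sub_cancel, Nat.sub_zero]
    split_ifs <;> omega
  · rw [if_neg (by omega), if_neg (by omega)]

theorem shifted_moments_induction_step {F : Type*} [Field F] (μ : ℕ → F)
    (n m : ℕ) (hn : 2 ≤ n) (hm : 1 ≤ m)
    (hden : ∀ i ∈ Finset.Icc 1 (n - 1), Dm μ 1 (i + m) (i + m) ≠ 0) :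
    Matrix.det (Matrix.of fun i j : Fin n => Dm μ 0 ((i : ℕ) + m) (j : ℕ)) =
      Dm μ 0 m 0 *
        Matrix.det (Matrix.of fun i j : Fin (n - 1) =>
          Dm (fun k => μ (k + 1)) 0 ((i : ℕ) + m) (j : ℕ)) *
        ∏ i ∈ Finset.Icc 1 (n - 1),
          Dm μ 0 (i + m) (i + m) / Dm μ 1 (i + m) (i + m) := by
  obtain ⟨p, rfl⟩ : ∃ p, n = p + 2 := ⟨n - 2, by omega⟩
  simp only [show p + 2 - 1 = p + 1 from rfl] at hden ⊢
  set ν : ℕ → F := fun k => μ (k + 1) with hν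
  set M : Matrix (Fin (p+2)) (Fin (p+2)) F :=
    Matrix.of fun i j : Fin (p+2) => Dm μ 0 ((i : ℕ) + m) (j : ℕ) with hM
  set V : Matrix (Fin (p+1)) (Fin (p+1)) F :=
    Matrix.of fun i j : Fin (p+1) => Dm ν 0 ((i : ℕ) + m) (j : ℕ) with hV
  set T : Matrix (Fin (p+2)) (Fin (p+2)) F := Matrix.of fun i k : Fin (p+2) =>
    if i = k then (if (i:ℕ) = 0 then 1 else Dm μ 1 ((i:ℕ)+m) ((i:ℕ)+m))
    else if (k:ℕ) + 1 = (i:ℕ) then -(Dm μ 1 ((i:ℕ)+m+1) ((i:ℕ)+m+1)) else 0 with hT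
  set N : Matrix (Fin (p+2)) (Fin (p+2)) F := Matrix.of fun i j : Fin (p+2) =>
    if (i:ℕ) = 0 then Dm μ 0 m (j:ℕ)
    else Dm μ 0 ((i:ℕ)+m) ((i:ℕ)+m) * Dm μ 1 ((i:ℕ)+m) (j:ℕ) with hN
  -- T * M = N
  have hTM : T * M = N := by
    ext i j
    rw [Matrix.mul_apply]
    rcases Nat.eq_zero_or_pos (i:ℕ) with hi | hi
    · have hi0 : i = 0 := Fin.ext hi
      subst hi0
      have hz : ∀ k : Fin (p+2), k ≠ 0 → T 0 k * M k j = 0 := by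
        intro k hk
        have h1 : T 0 k = 0 := by
          rw [hT]
          simp only [Matrix.of_apply]
          rw [if_neg (fun h => hk h.symm), if_neg (by simp only [Fin.val_zero]; omega)]
        rw [h1, zero_mul]
      rw [Fintype.sum_eq_single 0 hz]
      have h2 : T 0 0 = 1 := by rw [hT]; simp
      have h3 : N 0 j = Dm μ 0 m (j:ℕ) := by rw [hN]; simp
      have h4 : M 0 j = Dm μ 0 (0+m) (j:ℕ) := by rw [hM]; simp
      rw [h2, h3, h4, one_mul, zero_add]
    · obtain ⟨i', hi'⟩ : ∃ i', (i:ℕ) = i' + 1 := ⟨(i:ℕ) - 1, by omega⟩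
      have hk0lt : i' < p + 2 := by have := i.isLt; omega
      have hik0 : i ≠ ⟨i', hk0lt⟩ := by
        intro h
        have h2 : (i:ℕ) = i' := by rw [h]
        omega
      have hz : ∀ x : Fin (p+2), x ≠ i ∧ x ≠ ⟨i', hk0lt⟩ → T i x * M x j = 0 := by
        intro x hx
        have h1 : T i x = 0 := by
          rw [hT]
          simp only [Matrix.of_apply]
          rw [if_neg (fun h => hx.1 h.symm), if_neg (by
            intro h
            exact hx.2 (Fin.ext (show (x:ℕ) = i' by omega)))]
        rw [h1, zero_mul]
      rw [Fintype.sum_eq_add i ⟨i', hk0lt⟩ hik0 hz]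
      have h1 : T i i = Dm μ 1 ((i:ℕ)+m) ((i:ℕ)+m) := by
        rw [hT]
        simp only [Matrix.of_apply, if_true]
        rw [if_neg (show ¬(i:ℕ) = 0 by omega)]
      have h2 : T i ⟨i', hk0lt⟩ = -(Dm μ 1 ((i:ℕ)+m+1) ((i:ℕ)+m+1)) := by
        rw [hT]
        simp only [Matrix.of_apply]
        rw [if_neg hik0, if_pos (show ((⟨i', hk0lt⟩ : Fin (p+2)):ℕ) + 1 = (i:ℕ) by
          show i' + 1 = (i:ℕ); omega)]
      have h3 : M i j = Dm μ 0 ((i:ℕ)+m) (j:ℕ) := by rw [hM]; simp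
      have h4 : M ⟨i', hk0lt⟩ j = Dm μ 0 (i'+m) (j:ℕ) := by rw [hM]; simp
      have h5 : N i j = Dm μ 0 ((i:ℕ)+m) ((i:ℕ)+m) * Dm μ 1 ((i:ℕ)+m) (j:ℕ) := by
        rw [hN]
        simp only [Matrix.of_apply]
        rw [if_neg (show ¬(i:ℕ) = 0 by omega)]
      rw [h1, h2, h3, h4, h5]
      obtain ⟨t, ht⟩ : ∃ t, (i:ℕ) + m = t + 2 := ⟨i' + m - 1, by omega⟩
      have hh2 : i' + m = t + 1 := by omega
      have hh3 : (i:ℕ) + m + 1 = t + 3 := by omega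
      rw [hh3, ht, hh2]
      linear_combination Dm_key μ t (j:ℕ)
  -- det T
  have hdetT : T.det = ∏ i : Fin (p+1), Dm μ 1 ((i:ℕ)+1+m) ((i:ℕ)+1+m) := by
    rw [Matrix.det_of_lowerTriangular T (by
      intro i j hij
      have hij' : (i:ℕ) < (j:ℕ) := hij
      rw [hT]
      simp only [Matrix.of_apply]
      rw [if_neg (by intro h; rw [h] at hij'; omega), if_neg (by omega)])]
    rw [Fin.prod_univ_succ]
    have h0 : T 0 0 = 1 := by rw [hT]; simp
    rw [h0, one_mul]
    apply Finset.prod_congr rfl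
    intro i _
    rw [hT]
    simp only [Matrix.of_apply, if_true]
    rw [if_neg (show ¬((Fin.succ i : Fin (p+2)):ℕ) = 0 by simp)]
    simp [Fin.val_succ]
  -- det N
  have hdetN : N.det = Dm μ 0 m 0 *
      ((∏ i : Fin (p+1), Dm μ 0 ((i:ℕ)+1+m) ((i:ℕ)+1+m)) * V.det) := by
    rw [det_single_col_zero N (fun i hi => by
      rw [hN]
      simp only [Matrix.of_apply, Fin.val_zero]
      rw [if_neg (show ¬(i:ℕ) = 0 from fun h => hi (Fin.ext h)),
        show Dm μ 1 ((i:ℕ)+m) 0 = 0 from by rw [Dm, if_neg (by omega)], mul_zero])]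
    have h00 : N 0 0 = Dm μ 0 m 0 := by rw [hN]; simp
    rw [h00]
    congr 1
    have hsub : N.submatrix Fin.succ Fin.succ = Matrix.of
        (fun i j : Fin (p+1) => Dm μ 0 ((i:ℕ)+1+m) ((i:ℕ)+1+m) * V i j) := by
      ext i j
      rw [hN]
      simp only [Matrix.submatrix_apply, Matrix.of_apply, Fin.val_succ]
      rw [if_neg (show ¬(i:ℕ) + 1 = 0 by omega)]
      rw [hV]
      simp only [Matrix.of_apply]
      rw [show (i:ℕ)+1+m = ((i:ℕ)+m)+1 from by omega, Dm_shift]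
    rw [hsub, Matrix.det_mul_column]
  -- combine
  have hE : T.det * M.det = N.det := by rw [← Matrix.det_mul, hTM]
  rw [hdetT, hdetN] at hE
  have hfin : ∀ g : ℕ → F, ∏ i : Fin (p+1), g ((i:ℕ)+1+m)
      = ∏ i ∈ Finset.range (p+1), g (i+1+m) :=
    fun g => Fin.prod_univ_eq_prod_range (fun i => g (i+1+m)) (p+1)
  rw [hfin (fun b => Dm μ 1 b b), hfin (fun b => Dm μ 0 b b)] at hE
  have hd_ne : ∀ i ∈ Finset.range (p+1), Dm μ 1 (i+1+m) (i+1+m) ≠ 0 := by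
    intro i hi
    have := hden (i+1) (by
      rw [Finset.mem_Icc]
      simp only [Finset.mem_range] at hi
      omega)
    simpa using this
  have hIcc : ∀ f : ℕ → F, ∏ i ∈ Finset.Icc 1 (p+1), f i
      = ∏ i ∈ Finset.range (p+1), f (i+1) := by
    intro f
    rw [← Finset.Ico_add_one_right_eq_Icc, Finset.prod_Ico_eq_prod_range]
    apply Finset.prod_congr (by norm_num)
    intro i _
    rw [add_comm]
  rw [hIcc (fun i => Dm μ 0 (i+m) (i+m) / Dm μ 1 (i+m) (i+m)), Finset.prod_div_distrib]
  have hprod_ne : ∏ i ∈ Finset.range (p+1), Dm μ 1 (i+1+m) (i+1+m) ≠ 0 :=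
    Finset.prod_ne_zero_iff.mpr hd_ne
  field_simp
  change _ = _ * V.det * _
  linear_combination hE
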